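/- Let s ∈ ℕ and let T be the set of all 1-Lipschitz functions f : ℝ^s → ℝ with f(0) = 0. For 0 < δ ≤ 1 define the norm ‖f‖_(δ) = sup_{x∈ℝ^s} |f(x)|/(‖x‖₂^{1+δ} + 1) on T. Then for all ε > 0 and 0 < δ ≤ 1, log N(T, ‖·‖_(δ), ε) ≤ (C√s/ε)^s · (1/δ), where C ≥ 1 is a universal constant. -/

import Mathlib

open MeasureTheory ProbabilityTheory
open scoped ENNReal NNReal RealInnerProductSpace

noncomputable section

def coverN {T : Type*} (ρ : T → T → ℝ) (ε : ℝ) : ℝ≥0∞ :=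
  ⨅ S ∈ {S : Set T | S.Finite ∧ ∀ t, ∃ s ∈ S, ρ t s ≤ ε}, (S.ncard : ℝ≥0∞)

namespace CoverAux

abbrev E (s : ℕ) := EuclideanSpace ℝ (Fin s)
abbrev T (s : ℕ) := {f : E s → ℝ // LipschitzWith 1 f ∧ f 0 = 0}

/-- grid spacing at scale `k` -/
def hh (s : ℕ) (δ ε : ℝ) (k : ℕ) : ℝ := (ε / (2 * Real.sqrt s)) * (2 : ℝ) ^ ((1 + δ) * k)

/-- number of scales -/
def KK (δ ε : ℝ) : ℕ := ⌈Real.logb 2 (2 / ε) / δ⌉₊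

/-- lattice radius at scale `k` -/
def NN (s : ℕ) (δ ε : ℝ) (k : ℕ) : ℕ := ⌈(2:ℝ) ^ (k + 1) / hh s δ ε k⌉₊

/-- lattice point -/
def pt (s : ℕ) (δ ε : ℝ) (k : ℕ) (z : Fin s → ℤ) : E s := WithLp.toLp 2 (fun i => hh s δ ε k * (z i : ℝ))

/-- one step towards the origin -/
def stp {s : ℕ} (z : Fin s → ℤ) : Fin s → ℤ :=
  if h : ∃ i, z i ≠ 0 then Function.update z h.choose (z h.choose - Int.sign (z h.choose)) else z

/-- the index set: all lattice points at all scales -/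
def P0 (s : ℕ) (δ ε : ℝ) : Finset (ℕ × (Fin s → ℤ)) :=
  (Finset.range (KK δ ε + 1)).biUnion fun k =>
    {k} ×ˢ Fintype.piFinset fun _ : Fin s => Finset.Icc (-(NN s δ ε k : ℤ)) ((NN s δ ε k : ℤ))

/-- rounded value of `f` at a lattice point -/
def Rd (s : ℕ) (δ ε : ℝ) (f : E s → ℝ) (p : ℕ × (Fin s → ℤ)) : ℤ :=
  round (f (pt s δ ε p.1 p.2) / hh s δ ε p.1)

/-- rounded increment -/
def Jd (s : ℕ) (δ ε : ℝ) (f : E s → ℝ) (p : ℕ × (Fin s → ℤ)) : ℤ :=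
  Rd s δ ε f p - Rd s δ ε f (p.1, stp p.2)

def clip (n : ℤ) : ℤ := max (-2) (min 2 n)

def t0 (s : ℕ) : T s :=
  ⟨fun _ => 0, (LipschitzWith.const' (0:ℝ)).weaken (zero_le_one), rfl⟩

/-- discretization map -/
def Dm (s : ℕ) (δ ε : ℝ) (f : T s) : ↥(P0 s δ ε) → ↥(Finset.Icc (-2:ℤ) 2) :=
  fun p => ⟨clip (Jd s δ ε f.1 p.1), by
    simp only [Finset.mem_Icc, clip]
    constructor
    · exact le_max_left _ _
    · exact max_le (by norm_num) (min_le_left _ _)⟩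

def rep (s : ℕ) (δ ε : ℝ) (v : ↥(P0 s δ ε) → ↥(Finset.Icc (-2:ℤ) 2)) : T s :=
  @dite _ (∃ g, Dm s δ ε g = v) (Classical.propDecidable _) (fun h => h.choose) (fun _ => t0 s)

def Phi (s : ℕ) (δ ε : ℝ) (f : T s) : T s := rep s δ ε (Dm s δ ε f)

lemma Dm_Phi (s : ℕ) (δ ε : ℝ) (f : T s) : Dm s δ ε (Phi s δ ε f) = Dm s δ ε f := by
  have h : ∃ g, Dm s δ ε g = Dm s δ ε f := ⟨f, rfl⟩
  have : Phi s δ ε f = h.choose := dif_pos h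
  rw [this]
  exact h.choose_spec


section Lemmas
variable {s : ℕ} {δ ε : ℝ}

lemma eta_pos (hs : 1 ≤ s) (hε : 0 < ε) : 0 < ε / (2 * Real.sqrt s) := by
  have h : (0:ℝ) < Real.sqrt s := Real.sqrt_pos.mpr (by exact_mod_cast Nat.pos_of_ne_zero (by omega))
  positivity

lemma hh_pos (hs : 1 ≤ s) (hε : 0 < ε) (k : ℕ) : 0 < hh s δ ε k :=
  mul_pos (eta_pos hs hε) (Real.rpow_pos_of_pos two_pos _)

lemma round_approx {h t : ℝ} (hh0 : 0 < h) : |t - h * round (t / h)| ≤ h / 2 := by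
  have h1 := abs_sub_round (t / h)
  have e : t - h * round (t / h) = h * (t / h - round (t / h)) := by
    field_simp
  rw [e, abs_mul, abs_of_pos hh0]
  nlinarith [abs_nonneg (t / h - (round (t / h) : ℝ))]

lemma abs_coord_le_norm (x : E s) (i : Fin s) : |x i| ≤ ‖x‖ := by
  rw [EuclideanSpace.norm_eq]
  have h1 : |x i| = Real.sqrt (‖x i‖ ^ 2) := by
    rw [Real.sqrt_sq_eq_abs, Real.norm_eq_abs, abs_abs]
  rw [h1]
  exact Real.sqrt_le_sqrt (Finset.single_le_sum (f := fun j => ‖x j‖ ^ 2)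
    (fun j _ => sq_nonneg _) (Finset.mem_univ i))

lemma norm_le_of_coords {y : E s} {c : ℝ} (hc0 : 0 ≤ c) (hc : ∀ i, |y i| ≤ c) :
    ‖y‖ ≤ Real.sqrt s * c := by
  rw [EuclideanSpace.norm_eq]
  have h1 : ∑ i, ‖y i‖ ^ 2 ≤ ∑ _i : Fin s, c ^ 2 := Finset.sum_le_sum (fun i _ => by
    rw [Real.norm_eq_abs]
    have := hc i
    nlinarith [abs_nonneg (y i)])
  calc Real.sqrt (∑ i, ‖y i‖ ^ 2) ≤ Real.sqrt (∑ _i : Fin s, c ^ 2) := Real.sqrt_le_sqrt h1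
    _ = Real.sqrt (s * c ^ 2) := by
        rw [Finset.sum_const, Finset.card_univ, Fintype.card_fin, nsmul_eq_mul]
    _ = Real.sqrt s * c := by
        rw [Real.sqrt_mul (by positivity), Real.sqrt_sq hc0]

lemma stp_of_ne (z : Fin s → ℤ) (h : ∃ i, z i ≠ 0) :
    stp z = Function.update z h.choose (z h.choose - Int.sign (z h.choose)) := dif_pos h

lemma stp_of_eq (z : Fin s → ℤ) (h : ¬ ∃ i, z i ≠ 0) : stp z = z := dif_neg h

lemma natAbs_sub_sign {a : ℤ} (ha : a ≠ 0) : (a - Int.sign a).natAbs + 1 = a.natAbs := by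
  rcases lt_trichotomy a 0 with h | h | h
  · rw [Int.sign_eq_neg_one_of_neg h]; omega
  · exact absurd h ha
  · rw [Int.sign_eq_one_of_pos h]; omega

lemma sum_stp (z : Fin s → ℤ) (h : ∃ i, z i ≠ 0) :
    (∑ i, (stp z i).natAbs) + 1 = ∑ i, (z i).natAbs := by
  classical
  have hne : z h.choose ≠ 0 := h.choose_spec
  have hfun : (fun j => (stp z j).natAbs)
      = Function.update (fun k => (z k).natAbs) h.choose ((z h.choose - Int.sign (z h.choose)).natAbs) := by
    funext j
    rw [stp_of_ne z h]
    exact Function.apply_update (fun _ n => n.natAbs) z h.choose _ j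
  have h2 : ∑ i, (stp z i).natAbs = ∑ i, Function.update (fun k => (z k).natAbs) h.choose
      ((z h.choose - Int.sign (z h.choose)).natAbs) i := by
    rw [← hfun]
  rw [h2, Finset.sum_update_of_mem (Finset.mem_univ _)]
  have h3 : (z h.choose).natAbs + ∑ i ∈ Finset.univ \ {h.choose}, (z i).natAbs
      = ∑ i, (z i).natAbs := by
    rw [Finset.sdiff_singleton_eq_erase]
    exact Finset.add_sum_erase _ (fun i => (z i).natAbs) (Finset.mem_univ _)
  have h4 := natAbs_sub_sign hne
  omega

lemma stp_natAbs_le (z : Fin s → ℤ) (i : Fin s) : (stp z i).natAbs ≤ (z i).natAbs := by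
  by_cases h : ∃ j, z j ≠ 0
  · rw [stp_of_ne z h]
    rcases eq_or_ne i h.choose with heq | hne
    · rw [heq, Function.update_self]
      rcases lt_trichotomy (z h.choose) 0 with h' | h' | h'
      · rw [Int.sign_eq_neg_one_of_neg h']; omega
      · simp [h']
      · rw [Int.sign_eq_one_of_pos h']; omega
    · rw [Function.update_of_ne hne]
  · rw [stp_of_eq z h]

lemma sub_coord (a b : E s) (i : Fin s) : (a - b) i = a i - b i := rfl

lemma pt_sub_stp (hs : 1 ≤ s) (hε : 0 < ε) (k : ℕ) (z : Fin s → ℤ) :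
    ‖pt s δ ε k z - pt s δ ε k (stp z)‖ ≤ hh s δ ε k := by
  have h2 : 0 < hh s δ ε k := hh_pos hs hε k
  by_cases h : ∃ j, z j ≠ 0
  · have hy : ∀ j, (pt s δ ε k z - pt s δ ε k (stp z)) j
        = if j = h.choose then hh s δ ε k * (Int.sign (z h.choose) : ℝ) else 0 := by
      intro j
      rw [sub_coord]
      show hh s δ ε k * (z j : ℝ) - hh s δ ε k * ((stp z j : ℤ) : ℝ) = _
      rw [stp_of_ne z h]
      rcases eq_or_ne j h.choose with heq | hne
      · subst heq
        rw [Function.update_self, if_pos rfl]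
        push_cast
        ring
      · rw [Function.update_of_ne hne, if_neg hne]
        ring
    have hsign : |(Int.sign (z h.choose) : ℝ)| ≤ 1 := by
      have hne := h.choose_spec
      rcases lt_trichotomy (z h.choose) 0 with h' | h' | h'
      · rw [Int.sign_eq_neg_one_of_neg h']; norm_num
      · exact absurd h' hne
      · rw [Int.sign_eq_one_of_pos h']; norm_num
    rw [EuclideanSpace.norm_eq]
    have hsum : ∑ j, ‖(pt s δ ε k z - pt s δ ε k (stp z)) j‖ ^ 2 ≤ (hh s δ ε k) ^ 2 := by
      rw [Finset.sum_eq_single h.choose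
        (fun j _ hj => by rw [hy j, if_neg hj]; simp)
        (fun hmem => absurd (Finset.mem_univ _) hmem)]
      rw [hy h.choose, if_pos rfl, Real.norm_eq_abs, abs_mul, abs_of_pos h2]
      have h7 : |(Int.sign (z h.choose) : ℝ)| ^ 2 ≤ 1 := by
        nlinarith [abs_nonneg ((Int.sign (z h.choose) : ℝ))]
      nlinarith [sq_nonneg (hh s δ ε k), h2]
    calc Real.sqrt (∑ j, ‖(pt s δ ε k z - pt s δ ε k (stp z)) j‖ ^ 2)
        ≤ Real.sqrt ((hh s δ ε k) ^ 2) := Real.sqrt_le_sqrt hsum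
      _ = hh s δ ε k := Real.sqrt_sq h2.le
  · rw [stp_of_eq z h]
    simp [h2.le]

lemma lip_bound {f : E s → ℝ} (hf : LipschitzWith 1 f) (a b : E s) : |f a - f b| ≤ ‖a - b‖ := by
  have h := hf.dist_le_mul a b
  simpa [Real.dist_eq, dist_eq_norm] using h

lemma Jd_bound (hs : 1 ≤ s) (hε : 0 < ε) {f : E s → ℝ} (hf : LipschitzWith 1 f)
    (p : ℕ × (Fin s → ℤ)) : -2 ≤ Jd s δ ε f p ∧ Jd s δ ε f p ≤ 2 := by
  obtain ⟨k, z⟩ := p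
  have h2 : 0 < hh s δ ε k := hh_pos hs hε k
  set a := f (pt s δ ε k z) / hh s δ ε k with ha
  set b := f (pt s δ ε k (stp z)) / hh s δ ε k with hb
  have hab : |a - b| ≤ 1 := by
    have h3 : |f (pt s δ ε k z) - f (pt s δ ε k (stp z))| ≤ hh s δ ε k :=
      le_trans (lip_bound hf _ _) (pt_sub_stp hs hε k z)
    have e : a - b = (f (pt s δ ε k z) - f (pt s δ ε k (stp z))) / hh s δ ε k := by
      rw [ha, hb]; ring
    rw [e, abs_div, abs_of_pos h2, div_le_one h2]
    exact h3
  have hcast : Jd s δ ε f (k, z) = round a - round b := rfl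
  obtain ⟨h4a, h4b⟩ := abs_le.mp (abs_sub_round a)
  obtain ⟨h5a, h5b⟩ := abs_le.mp (abs_sub_round b)
  obtain ⟨h6a, h6b⟩ := abs_le.mp hab
  constructor
  · rw [hcast]
    have hr : (-2 : ℝ) ≤ (round a : ℝ) - (round b : ℝ) := by linarith
    exact_mod_cast hr
  · rw [hcast]
    have hr : ((round a : ℝ) - (round b : ℝ)) ≤ 2 := by linarith
    exact_mod_cast hr

lemma clip_eq {n : ℤ} (h1 : -2 ≤ n) (h2 : n ≤ 2) : clip n = n := by
  rw [clip, min_eq_right h2, max_eq_right h1]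

lemma mem_P0 {k : ℕ} {z : Fin s → ℤ} :
    (k, z) ∈ P0 s δ ε ↔ k ≤ KK δ ε ∧ ∀ i, (z i).natAbs ≤ NN s δ ε k := by
  constructor
  · intro hmem
    simp only [P0, Finset.mem_biUnion, Finset.mem_range] at hmem
    obtain ⟨k', hk', hmem⟩ := hmem
    rw [Finset.mem_product, Finset.mem_singleton] at hmem
    obtain ⟨h1, h2⟩ := hmem
    have h1' : k = k' := h1
    subst h1'
    refine ⟨by omega, fun i => ?_⟩
    have h2' : z i ∈ Finset.Icc (-(NN s δ ε k : ℤ)) ((NN s δ ε k : ℤ)) :=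
      Fintype.mem_piFinset.mp h2 i
    rw [Finset.mem_Icc] at h2'
    omega
  · rintro ⟨hk, hz⟩
    simp only [P0, Finset.mem_biUnion, Finset.mem_range]
    refine ⟨k, by omega, Finset.mem_product.mpr ⟨Finset.mem_singleton_self _,
      Fintype.mem_piFinset.mpr fun i => Finset.mem_Icc.mpr ?_⟩⟩
    show -(NN s δ ε k : ℤ) ≤ z i ∧ z i ≤ (NN s δ ε k : ℤ)
    have := hz i
    omega

lemma P0_stp {k : ℕ} {z : Fin s → ℤ} (h : (k, z) ∈ P0 s δ ε) : (k, stp z) ∈ P0 s δ ε := by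
  rw [mem_P0] at h ⊢
  exact ⟨h.1, fun i => le_trans (stp_natAbs_le z i) (h.2 i)⟩

lemma pt_zero (k : ℕ) : pt s δ ε k (fun _ => 0) = 0 := by
  ext i
  show hh s δ ε k * ((0:ℤ) : ℝ) = (0 : E s) i
  simp

lemma Rd_eq (hs : 1 ≤ s) (hε : 0 < ε) (f g : T s) (hDm : Dm s δ ε f = Dm s δ ε g) :
    ∀ p ∈ P0 s δ ε, Rd s δ ε f.1 p = Rd s δ ε g.1 p := by
  suffices H : ∀ n : ℕ, ∀ k, ∀ z : Fin s → ℤ, (∑ i, (z i).natAbs) = n → (k, z) ∈ P0 s δ ε →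
      Rd s δ ε f.1 (k, z) = Rd s δ ε g.1 (k, z) by
    rintro ⟨k, z⟩ hp
    exact H _ k z rfl hp
  intro n
  induction n using Nat.strong_induction_on with
  | _ n IH =>
    intro k z hsum hp
    by_cases hz : ∃ i, z i ≠ 0
    · have hstp : (k, stp z) ∈ P0 s δ ε := P0_stp hp
      have hlt : (∑ i, (stp z i).natAbs) < n := by
        have := sum_stp z hz; omega
      have hr : Rd s δ ε f.1 (k, stp z) = Rd s δ ε g.1 (k, stp z) :=
        IH _ hlt k (stp z) rfl hstp
      have hJ : Jd s δ ε f.1 (k, z) = Jd s δ ε g.1 (k, z) := by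
        have hcf := congrFun hDm ⟨(k, z), hp⟩
        have hf2 := Jd_bound (δ := δ) hs hε f.2.1 (k, z)
        have hg2 := Jd_bound (δ := δ) hs hε g.2.1 (k, z)
        simp only [Dm, Subtype.mk.injEq] at hcf
        rwa [clip_eq hf2.1 hf2.2, clip_eq hg2.1 hg2.2] at hcf
      simp only [Jd] at hJ
      omega
    · push_neg at hz
      have hz0 : z = fun _ => 0 := funext fun i => hz i
      subst hz0
      simp only [Rd, pt_zero, f.2.2, g.2.2]

end Lemmas


section Dist
variable {s : ℕ} {δ ε : ℝ}

lemma KK_ge (hδ : 0 < δ) : Real.logb 2 (2 / ε) ≤ (KK δ ε : ℝ) * δ := by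
  have h := Nat.le_ceil (Real.logb 2 (2 / ε) / δ)
  rw [div_le_iff₀ hδ] at h
  exact h

lemma sqrt_s_ge_one (hs : 1 ≤ s) : (1:ℝ) ≤ Real.sqrt s := by
  rw [show (1:ℝ) = Real.sqrt 1 from Real.sqrt_one.symm]
  exact Real.sqrt_le_sqrt (by exact_mod_cast hs)

lemma tail_bound (hδ : 0 < δ) (hε : 0 < ε) {x : E s} (hx : (2:ℝ) ^ (KK δ ε + 1) ≤ ‖x‖) :
    2 * ‖x‖ ≤ ε * (‖x‖ ^ (1 + δ) + 1) := by
  have h2 : (1:ℝ) ≤ (2:ℝ) ^ (KK δ ε + 1) := by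
    calc (1:ℝ) = 1 ^ (KK δ ε + 1) := (one_pow _).symm
      _ ≤ 2 ^ (KK δ ε + 1) := by gcongr <;> norm_num
  have hx1 : (1:ℝ) ≤ ‖x‖ := le_trans h2 hx
  have hxpos : (0:ℝ) < ‖x‖ := lt_of_lt_of_le one_pos hx1
  have hd : ‖x‖ ^ (1 + δ) = ‖x‖ * ‖x‖ ^ δ := by
    rw [Real.rpow_add hxpos, Real.rpow_one]
  have hx' : (2:ℝ) ^ ((KK δ ε : ℝ) + 1) ≤ ‖x‖ := by
    have h5 := hx
    rw [← Real.rpow_natCast 2 (KK δ ε + 1)] at h5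
    push_cast at h5
    exact h5
  have hKδ : (2:ℝ) / ε ≤ ‖x‖ ^ δ := by
    calc (2:ℝ)/ε = (2:ℝ) ^ (Real.logb 2 (2/ε)) :=
          (Real.rpow_logb two_pos (by norm_num) (by positivity)).symm
      _ ≤ (2:ℝ) ^ ((KK δ ε : ℝ) * δ) :=
          Real.rpow_le_rpow_of_exponent_le one_le_two (KK_ge hδ)
      _ ≤ (2:ℝ) ^ (((KK δ ε : ℝ) + 1) * δ) := by
          apply Real.rpow_le_rpow_of_exponent_le one_le_two
          nlinarith [Nat.cast_nonneg (α := ℝ) (KK δ ε)]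
      _ = ((2:ℝ) ^ ((KK δ ε : ℝ) + 1)) ^ δ := by
          rw [← Real.rpow_mul (by norm_num : (0:ℝ) ≤ 2)]
      _ ≤ ‖x‖ ^ δ := Real.rpow_le_rpow (by positivity) hx' hδ.le
  rw [div_le_iff₀ hε] at hKδ
  rw [hd]
  nlinarith [Real.rpow_nonneg (norm_nonneg x) δ]

lemma scale_choice (hδ : 0 < δ) (hε0 : 0 < ε) {x : E s}
    (hx : ‖x‖ < (2:ℝ) ^ (KK δ ε + 1)) :
    ∃ k ≤ KK δ ε, (∀ i, |x i| ≤ (2:ℝ) ^ (k + 1)) ∧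
      (2:ℝ) ^ ((1 + δ) * (k:ℝ)) ≤ ‖x‖ ^ (1 + δ) + 1 := by
  have hw0 : (0:ℝ) ≤ ‖x‖ ^ (1 + δ) := Real.rpow_nonneg (norm_nonneg x) _
  by_cases h1 : ‖x‖ < 1
  · refine ⟨0, Nat.zero_le _, fun i => ?_, ?_⟩
    · calc |x i| ≤ ‖x‖ := abs_coord_le_norm x i
        _ ≤ 2 ^ (0 + 1) := by norm_num; linarith
    · simp only [Nat.cast_zero, mul_zero, Real.rpow_zero]
      linarith
  · push_neg at h1
    have hxpos : (0:ℝ) < ‖x‖ := lt_of_lt_of_le one_pos h1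
    set k := ⌊Real.logb 2 ‖x‖⌋₊ with hk
    have hlogb0 : 0 ≤ Real.logb 2 ‖x‖ := Real.logb_nonneg one_lt_two h1
    have hk1 : (2:ℝ) ^ (k:ℝ) ≤ ‖x‖ := by
      calc (2:ℝ) ^ (k:ℝ) ≤ (2:ℝ) ^ (Real.logb 2 ‖x‖) :=
            Real.rpow_le_rpow_of_exponent_le one_le_two (Nat.floor_le hlogb0)
        _ = ‖x‖ := Real.rpow_logb two_pos (by norm_num) hxpos
    have hk2 : ‖x‖ < (2:ℝ) ^ ((k:ℝ) + 1) := by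
      calc ‖x‖ = (2:ℝ) ^ (Real.logb 2 ‖x‖) := (Real.rpow_logb two_pos (by norm_num) hxpos).symm
        _ < (2:ℝ) ^ ((k:ℝ) + 1) :=
            Real.rpow_lt_rpow_of_exponent_lt one_lt_two (Nat.lt_floor_add_one _)
    have hkK : k ≤ KK δ ε := by
      by_contra hc
      push_neg at hc
      have h3 : ((KK δ ε + 1 : ℕ) : ℝ) ≤ (k : ℝ) := by exact_mod_cast hc
      have h4 : (2:ℝ) ^ (KK δ ε + 1) ≤ (2:ℝ) ^ (k:ℝ) := by
        rw [← Real.rpow_natCast 2 (KK δ ε + 1)]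
        exact Real.rpow_le_rpow_of_exponent_le one_le_two h3
      linarith
    refine ⟨k, hkK, fun i => ?_, ?_⟩
    · calc |x i| ≤ ‖x‖ := abs_coord_le_norm x i
        _ ≤ (2:ℝ) ^ ((k:ℝ) + 1) := hk2.le
        _ = (2:ℝ) ^ (k + 1) := by
            rw [← Real.rpow_natCast 2 (k + 1)]
            push_cast
            ring_nf
    · have e1 : (2:ℝ) ^ ((1 + δ) * (k:ℝ)) = ((2:ℝ) ^ (k:ℝ)) ^ (1 + δ) := by
        rw [mul_comm, Real.rpow_mul (by norm_num : (0:ℝ) ≤ 2)]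
      rw [e1]
      have e2 : ((2:ℝ) ^ (k:ℝ)) ^ (1 + δ) ≤ ‖x‖ ^ (1 + δ) :=
        Real.rpow_le_rpow (Real.rpow_nonneg (by norm_num) _) hk1 (by linarith)
      linarith

lemma dist_bound (hs : 1 ≤ s) (hδ0 : 0 < δ) (hε0 : 0 < ε)
    (f g : T s) (hR : ∀ p ∈ P0 s δ ε, Rd s δ ε f.1 p = Rd s δ ε g.1 p) (x : E s) :
    |f.1 x - g.1 x| ≤ ε * (‖x‖ ^ (1 + δ) + 1) := by
  by_cases hx : ‖x‖ < (2:ℝ) ^ (KK δ ε + 1)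
  · obtain ⟨k, hkK, hco, hwt⟩ := scale_choice (ε := ε) hδ0 hε0 hx
    have hhp : 0 < hh s δ ε k := hh_pos hs hε0 k
    set z : Fin s → ℤ := fun i => round (x i / hh s δ ε k) with hz
    have hmem : (k, z) ∈ P0 s δ ε := by
      rw [mem_P0]
      refine ⟨hkK, fun i => ?_⟩
      have h3 : |x i / hh s δ ε k| ≤ (2:ℝ) ^ (k+1) / hh s δ ε k := by
        rw [abs_div, abs_of_pos hhp]
        gcongr
        exact hco i
      obtain ⟨p1, p2⟩ := abs_le.mp (abs_sub_round (x i / hh s δ ε k))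
      obtain ⟨p3, p4⟩ := abs_le.mp h3
      have hle : ((2:ℝ) ^ (k+1) / hh s δ ε k) ≤ (NN s δ ε k : ℝ) := Nat.le_ceil _
      have hzi : (z i : ℝ) = round (x i / hh s δ ε k) := by rw [hz]
      rw [← hzi] at p1 p2
      have h6 : ((z i).natAbs : ℝ) < (NN s δ ε k : ℝ) + 1 := by
        rw [Nat.cast_natAbs, Int.cast_abs, abs_lt]
        constructor <;> linarith
      have h7 : (z i).natAbs < NN s δ ε k + 1 := by exact_mod_cast h6
      omega
    have hclose : ‖x - pt s δ ε k z‖ ≤ Real.sqrt s * (hh s δ ε k / 2) := by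
      apply norm_le_of_coords (by positivity)
      intro i
      rw [sub_coord]
      show |x i - hh s δ ε k * (z i : ℝ)| ≤ hh s δ ε k / 2
      have hzi : (z i : ℝ) = round (x i / hh s δ ε k) := by rw [hz]
      rw [hzi]
      exact round_approx hhp
    have hfg : |f.1 (pt s δ ε k z) - g.1 (pt s δ ε k z)| ≤ hh s δ ε k := by
      have hr' : round (f.1 (pt s δ ε k z) / hh s δ ε k)
          = round (g.1 (pt s δ ε k z) / hh s δ ε k) := hR (k, z) hmem
      have hrr : ((round (f.1 (pt s δ ε k z) / hh s δ ε k) : ℤ) : ℝ)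
          = ((round (g.1 (pt s δ ε k z) / hh s δ ε k) : ℤ) : ℝ) := by exact_mod_cast hr'
      obtain ⟨q1, q2⟩ := abs_le.mp (round_approx (t := f.1 (pt s δ ε k z)) hhp)
      obtain ⟨q3, q4⟩ := abs_le.mp (round_approx (t := g.1 (pt s δ ε k z)) hhp)
      have hrr2 : hh s δ ε k * ((round (f.1 (pt s δ ε k z) / hh s δ ε k) : ℤ) : ℝ)
          = hh s δ ε k * ((round (g.1 (pt s δ ε k z) / hh s δ ε k) : ℤ) : ℝ) := by rw [hrr]
      rw [abs_le]
      constructor <;> linarith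
    have lip1 := lip_bound f.2.1 x (pt s δ ε k z)
    have lip2 := lip_bound g.2.1 x (pt s δ ε k z)
    have hs1 : (1:ℝ) ≤ Real.sqrt s := sqrt_s_ge_one hs
    have tri1 : |f.1 x - g.1 x| ≤ |f.1 x - f.1 (pt s δ ε k z)|
        + |f.1 (pt s δ ε k z) - g.1 (pt s δ ε k z)| + |g.1 (pt s δ ε k z) - g.1 x| := by
      calc |f.1 x - g.1 x| ≤ |f.1 x - g.1 (pt s δ ε k z)| + |g.1 (pt s δ ε k z) - g.1 x| :=
            abs_sub_le _ _ _
        _ ≤ (|f.1 x - f.1 (pt s δ ε k z)| + |f.1 (pt s δ ε k z) - g.1 (pt s δ ε k z)|)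
            + |g.1 (pt s δ ε k z) - g.1 x| := by
            have := abs_sub_le (f.1 x) (f.1 (pt s δ ε k z)) (g.1 (pt s δ ε k z))
            linarith
    have lip2' : |g.1 (pt s δ ε k z) - g.1 x| ≤ ‖x - pt s δ ε k z‖ := by
      rw [abs_sub_comm]
      exact lip2
    have key : |f.1 x - g.1 x| ≤ 2 * Real.sqrt s * hh s δ ε k := by
      nlinarith [hclose, hfg, hhp]
    have hval : 2 * Real.sqrt s * hh s δ ε k = ε * (2:ℝ) ^ ((1 + δ) * (k:ℝ)) := by
      have hsp : (0:ℝ) < Real.sqrt s := by linarith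
      rw [hh]
      field_simp
    calc |f.1 x - g.1 x| ≤ 2 * Real.sqrt s * hh s δ ε k := key
      _ = ε * (2:ℝ) ^ ((1 + δ) * (k:ℝ)) := hval
      _ ≤ ε * (‖x‖ ^ (1 + δ) + 1) := mul_le_mul_of_nonneg_left hwt hε0.le
  · push_neg at hx
    have h1 : |f.1 x| ≤ ‖x‖ := by
      have h := lip_bound f.2.1 x 0
      simpa [f.2.2] using h
    have h2 : |g.1 x| ≤ ‖x‖ := by
      have h := lip_bound g.2.1 x 0
      simpa [g.2.2] using h
    have h3 := tail_bound (s := s) hδ0 hε0 hx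
    obtain ⟨r1, r2⟩ := abs_le.mp h1
    obtain ⟨r3, r4⟩ := abs_le.mp h2
    rw [abs_le]
    constructor <;> linarith

end Dist


section Count
variable {s : ℕ} {δ ε : ℝ}

lemma card_P0_le : (P0 s δ ε).card ≤ ∑ k ∈ Finset.range (KK δ ε + 1), (2 * NN s δ ε k + 1) ^ s := by
  apply le_trans Finset.card_biUnion_le
  apply Finset.sum_le_sum
  intro k _
  rw [Finset.card_product, Finset.card_singleton, one_mul, Fintype.card_piFinset]
  have hc : (Finset.Icc (-(NN s δ ε k : ℤ)) ((NN s δ ε k : ℤ))).card = 2 * NN s δ ε k + 1 := by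
    rw [Int.card_Icc]
    omega
  rw [Finset.prod_const, hc, Finset.card_univ, Fintype.card_fin]

lemma add3_pow (hs : 1 ≤ s) {a : ℝ} (ha : 0 ≤ a) : (a + 3) ^ s ≤ (2 * a) ^ s + 6 ^ s := by
  rcases le_total a 3 with h | h
  · have h1 : (a + 3) ^ s ≤ 6 ^ s := pow_le_pow_left₀ (by linarith) (by linarith) s
    have h2 : (0:ℝ) ≤ (2 * a) ^ s := pow_nonneg (by linarith) s
    linarith
  · have h1 : (a + 3) ^ s ≤ (2 * a) ^ s := pow_le_pow_left₀ (by linarith) (by linarith) s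
    have h2 : (0:ℝ) ≤ (6:ℝ) ^ s := pow_nonneg (by norm_num) s
    linarith

set_option maxHeartbeats 1000000 in
lemma count_bound (hs : 1 ≤ s) (hδ0 : 0 < δ) (hδ1 : δ ≤ 1) (hε0 : 0 < ε) (hε1 : ε ≤ 1) :
    2 * ((∑ k ∈ Finset.range (KK δ ε + 1), (2 * NN s δ ε k + 1) ^ s : ℕ) : ℝ)
      ≤ (1000 * Real.sqrt s / ε) ^ s * (1 / δ) := by
  have hsq1 : (1:ℝ) ≤ Real.sqrt s := sqrt_s_ge_one hs
  have hsqpos : (0:ℝ) < Real.sqrt s := by linarith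
  obtain ⟨η, hη⟩ : ∃ t : ℝ, t = ε / (2 * Real.sqrt s) := ⟨_, rfl⟩
  have hηpos : 0 < η := by rw [hη]; exact eta_pos hs hε0
  obtain ⟨r, hrdef⟩ : ∃ t : ℝ, t = (2:ℝ) ^ (-δ) := ⟨_, rfl⟩
  have hr0 : 0 < r := by rw [hrdef]; exact Real.rpow_pos_of_pos two_pos _
  have hr1 : r < 1 := by
    rw [hrdef]
    exact Real.rpow_lt_one_of_one_lt_of_neg one_lt_two (by linarith)
  have hqr : r ^ s ≤ r := by
    calc r ^ s ≤ r ^ 1 := pow_le_pow_of_le_one hr0.le hr1.le hs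
      _ = r := pow_one r
  have hq0 : (0:ℝ) ≤ r ^ s := pow_nonneg hr0.le _
  -- 1 - r ≥ δ/4
  have hδ4 : δ / 4 ≤ 1 - r := by
    have hln : (1:ℝ)/2 ≤ Real.log 2 := by linarith [Real.log_two_gt_d9]
    have h2δpos : (0:ℝ) < (2:ℝ) ^ δ := Real.rpow_pos_of_pos two_pos _
    have h2δ : 1 + δ/2 ≤ (2:ℝ) ^ δ := by
      have h := Real.add_one_le_exp (Real.log 2 * δ)
      have hmul : (1/2) * δ ≤ Real.log 2 * δ := mul_le_mul_of_nonneg_right hln hδ0.le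
      rw [Real.rpow_def_of_pos two_pos]
      linarith
    have h2up : (2:ℝ) ^ δ ≤ 2 := by
      calc (2:ℝ) ^ δ ≤ (2:ℝ) ^ (1:ℝ) := Real.rpow_le_rpow_of_exponent_le one_le_two hδ1
        _ = 2 := Real.rpow_one 2
    have hrinv : r = ((2:ℝ) ^ δ)⁻¹ := by
      rw [hrdef, Real.rpow_neg (by norm_num : (0:ℝ) ≤ 2)]
    rw [hrinv]
    have hcancel : (2:ℝ) ^ δ * ((2:ℝ) ^ δ)⁻¹ = 1 := mul_inv_cancel₀ (ne_of_gt h2δpos)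
    have hinv0 : 0 < ((2:ℝ) ^ δ)⁻¹ := by positivity
    nlinarith
  -- geometric sum
  have h1q : 0 < 1 - r ^ s := by nlinarith
  have hgeom : ∑ k ∈ Finset.range (KK δ ε + 1), (r ^ s) ^ k ≤ 4 / δ := by
    have hne : r ^ s ≠ 1 := by nlinarith
    rw [geom_sum_eq hne]
    have e : ((r ^ s) ^ (KK δ ε + 1) - 1) / (r ^ s - 1)
        = (1 - (r ^ s) ^ (KK δ ε + 1)) / (1 - r ^ s) := by
      rw [← neg_div_neg_eq]
      ring_nf
    rw [e]
    have hnum : 1 - (r ^ s) ^ (KK δ ε + 1) ≤ 1 := by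
      nlinarith [pow_nonneg hq0 (KK δ ε + 1)]
    calc (1 - (r ^ s) ^ (KK δ ε + 1)) / (1 - r ^ s) ≤ 1 / (1 - r ^ s) := by gcongr
      _ ≤ 4 / δ := by
          rw [div_le_div_iff₀ h1q hδ0]
          nlinarith
  -- bound on each summand
  have hmain : ∀ k, ((2 * NN s δ ε k + 1 : ℕ) : ℝ) ^ s
      ≤ (8 / η) ^ s * (r ^ s) ^ k + 6 ^ s := by
    intro k
    have hhp : 0 < hh s δ ε k := hh_pos hs hε0 k
    have hrk : ((2:ℝ) ^ (-δ)) ^ k = (2:ℝ) ^ (-δ * (k:ℝ)) := by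
      rw [← Real.rpow_natCast ((2:ℝ) ^ (-δ)) k, ← Real.rpow_mul (by norm_num : (0:ℝ) ≤ 2)]
    have hB : (2:ℝ) ^ (k+1) / hh s δ ε k = 2 / η * r ^ k := by
      rw [hrdef, hrk, hh, ← hη]
      rw [show (2:ℝ) ^ (k+1) = (2:ℝ) ^ ((k:ℝ) + 1) by
        rw [← Real.rpow_natCast 2 (k+1)]; push_cast; ring_nf]
      rw [div_eq_iff (mul_ne_zero hηpos.ne' (Real.rpow_pos_of_pos two_pos _).ne')]
      have hcomb : (2:ℝ) ^ (-δ * (k:ℝ)) * (2:ℝ) ^ ((1 + δ) * (k:ℝ)) = (2:ℝ) ^ ((k:ℝ)) := by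
        rw [← Real.rpow_add two_pos]
        congr 1
        ring
      have h2k1 : (2:ℝ) ^ ((k:ℝ) + 1) = (2:ℝ) ^ ((k:ℝ)) * 2 := by
        rw [Real.rpow_add two_pos, Real.rpow_one]
      rw [h2k1, show (2:ℝ) / η * (2:ℝ) ^ (-δ * (k:ℝ)) * (η * (2:ℝ) ^ ((1 + δ) * (k:ℝ)))
          = ((2:ℝ) ^ (-δ * (k:ℝ)) * (2:ℝ) ^ ((1 + δ) * (k:ℝ))) * 2 * (η / η) by ring]
      rw [div_self (ne_of_gt hηpos), mul_one, hcomb]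
    have hNle : (NN s δ ε k : ℝ) ≤ 2 / η * r ^ k + 1 := by
      have hB0 : 0 ≤ (2:ℝ) ^ (k+1) / hh s δ ε k := by positivity
      have h0 : ((NN s δ ε k : ℕ) : ℝ) < (2:ℝ) ^ (k+1) / hh s δ ε k + 1 :=
        Nat.ceil_lt_add_one hB0
      rw [hB] at h0
      exact h0.le
    have hcast : ((2 * NN s δ ε k + 1 : ℕ) : ℝ) = 2 * (NN s δ ε k : ℝ) + 1 := by push_cast; ring
    have hsum : ((2 * NN s δ ε k + 1 : ℕ) : ℝ) ≤ (4 / η * r ^ k) + 3 := by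
      rw [hcast]
      have e4 : 4 / η * r ^ k = 2 * (2 / η * r ^ k) := by ring
      rw [e4]
      linarith
    have ha : (0:ℝ) ≤ 4 / η * r ^ k := by positivity
    calc ((2 * NN s δ ε k + 1 : ℕ) : ℝ) ^ s ≤ ((4 / η * r ^ k) + 3) ^ s :=
          pow_le_pow_left₀ (by positivity) hsum s
      _ ≤ (2 * (4 / η * r ^ k)) ^ s + 6 ^ s := add3_pow hs ha
      _ = (8 / η) ^ s * (r ^ s) ^ k + 6 ^ s := by
          rw [show (2 * (4 / η * r ^ k)) = 8 / η * r ^ k by ring, mul_pow, ← pow_mul,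
            ← pow_mul, Nat.mul_comm]
  -- K+1 bound
  have hK1 : ((KK δ ε : ℕ) : ℝ) + 1 ≤ 6 / (ε * δ) := by
    have h2ε1 : (1:ℝ) ≤ 2/ε := by rw [le_div_iff₀ hε0]; linarith
    have hx0 : 0 ≤ Real.logb 2 (2/ε) / δ :=
      div_nonneg (Real.logb_nonneg one_lt_two h2ε1) hδ0.le
    have hceil : ((KK δ ε : ℕ) : ℝ) < Real.logb 2 (2/ε) / δ + 1 := Nat.ceil_lt_add_one hx0
    have hlog : Real.logb 2 (2/ε) ≤ 4/ε := by
      have l1 : Real.log (2/ε) ≤ 2/ε := by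
        have := Real.log_le_sub_one_of_pos (show (0:ℝ) < 2/ε by positivity)
        linarith
      have l2 : (1:ℝ)/2 ≤ Real.log 2 := by linarith [Real.log_two_gt_d9]
      rw [Real.logb, div_le_iff₀ (by linarith : (0:ℝ) < Real.log 2)]
      have h4e : (0:ℝ) ≤ 4/ε := by positivity
      have hmt : (4/ε) * (1/2) ≤ (4/ε) * Real.log 2 := mul_le_mul_of_nonneg_left l2 h4e
      have e5 : (4/ε) * (1/2) = 2/ε := by ring
      linarith
    have hd1 : Real.logb 2 (2/ε) / δ ≤ (4/ε) / δ := by gcongr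
    have hd2 : (4/ε) / δ + 2 ≤ 6 / (ε * δ) := by
      rw [div_div]
      have hεδpos : 0 < ε * δ := mul_pos hε0 hδ0
      have h4 : (2:ℝ) ≤ 2 / (ε * δ) := by
        rw [le_div_iff₀ hεδpos]; nlinarith
      have e : 6 / (ε * δ) = 4 / (ε * δ) + 2 / (ε * δ) := by ring
      linarith [e ▸ le_refl (6 / (ε * δ))]
    linarith
  -- assemble
  have hcastsum : ((∑ k ∈ Finset.range (KK δ ε + 1), (2 * NN s δ ε k + 1) ^ s : ℕ) : ℝ)
      = ∑ k ∈ Finset.range (KK δ ε + 1), ((2 * NN s δ ε k + 1 : ℕ) : ℝ) ^ s := by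
    push_cast; rfl
  have hsum2 : ((∑ k ∈ Finset.range (KK δ ε + 1), (2 * NN s δ ε k + 1) ^ s : ℕ) : ℝ)
      ≤ (8 / η) ^ s * (4 / δ) + 6 ^ s * (6 / (ε * δ)) := by
    rw [hcastsum]
    calc ∑ k ∈ Finset.range (KK δ ε + 1), ((2 * NN s δ ε k + 1 : ℕ) : ℝ) ^ s
        ≤ ∑ k ∈ Finset.range (KK δ ε + 1), ((8 / η) ^ s * (r ^ s) ^ k + 6 ^ s) :=
          Finset.sum_le_sum (fun k _ => hmain k)
      _ = (8 / η) ^ s * (∑ k ∈ Finset.range (KK δ ε + 1), (r ^ s) ^ k)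
          + (KK δ ε + 1) * 6 ^ s := by
          rw [Finset.sum_add_distrib, ← Finset.mul_sum, Finset.sum_const, Finset.card_range,
            nsmul_eq_mul]
          push_cast
          ring
      _ ≤ (8 / η) ^ s * (4 / δ) + 6 ^ s * (6 / (ε * δ)) := by
          have hA : (0:ℝ) ≤ (8 / η) ^ s := by positivity
          have h6 : (0:ℝ) ≤ (6:ℝ) ^ s := by positivity
          have t1 : (8 / η) ^ s * (∑ k ∈ Finset.range (KK δ ε + 1), (r ^ s) ^ k)
              ≤ (8 / η) ^ s * (4 / δ) := mul_le_mul_of_nonneg_left hgeom hA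
          have t2 : ((KK δ ε : ℝ) + 1) * 6 ^ s ≤ 6 ^ s * (6 / (ε * δ)) := by
            rw [mul_comm]
            apply mul_le_mul_of_nonneg_left _ h6
            exact_mod_cast hK1
          push_cast at t2 ⊢
          linarith
  -- final numeric chain
  have hη8 : 8 / η = 16 * Real.sqrt s / ε := by
    rw [hη]; field_simp; ring
  have hs0 : s ≠ 0 := by omega
  have step1 : (8 / η) ^ s * (8 / δ) ≤ (128 * Real.sqrt s / ε) ^ s * (1 / δ) := by
    have h8 : (8:ℝ) ≤ 8 ^ s := le_self_pow₀ (by norm_num) hs0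
    have hA : (0:ℝ) ≤ (8 / η) ^ s := by positivity
    have e1 : (8 / η) ^ s * 8 ^ s = (128 * Real.sqrt s / ε) ^ s := by
      rw [← mul_pow, hη8]
      congr 1
      field_simp
      ring
    have : (8 / η) ^ s * 8 ≤ (128 * Real.sqrt s / ε) ^ s := by
      calc (8 / η) ^ s * 8 ≤ (8 / η) ^ s * 8 ^ s := mul_le_mul_of_nonneg_left h8 hA
        _ = (128 * Real.sqrt s / ε) ^ s := e1
    calc (8 / η) ^ s * (8 / δ) = (8 / η) ^ s * 8 * (1 / δ) := by ring
      _ ≤ (128 * Real.sqrt s / ε) ^ s * (1 / δ) := by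
          apply mul_le_mul_of_nonneg_right this (by positivity)
  have step2 : 6 ^ s * (12 / (ε * δ)) ≤ (128 * Real.sqrt s / ε) ^ s * (1 / δ) := by
    have h12 : (12:ℝ)/ε ≤ (12/ε) ^ s := le_self_pow₀ (by
      rw [le_div_iff₀ hε0]; linarith) hs0
    have h6 : (0:ℝ) ≤ (6:ℝ) ^ s := by positivity
    have e1 : (6:ℝ) ^ s * (12/ε) ^ s = (72 / ε) ^ s := by
      rw [← mul_pow]
      congr 1
      field_simp
      ring
    have t3 : (72/ε) ^ s ≤ (128 * Real.sqrt s / ε) ^ s := by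
      apply pow_le_pow_left₀ (by positivity)
      rw [div_le_div_iff₀ hε0 hε0]
      have hm := mul_le_mul_of_nonneg_right hsq1 hε0.le
      nlinarith [hm]
    calc 6 ^ s * (12 / (ε * δ)) = 6 ^ s * (12/ε) * (1/δ) := by
          ring
      _ ≤ (72/ε) ^ s * (1/δ) := by
          apply mul_le_mul_of_nonneg_right _ (by positivity)
          calc (6:ℝ) ^ s * (12/ε) ≤ 6 ^ s * (12/ε) ^ s := mul_le_mul_of_nonneg_left h12 h6
            _ = (72/ε) ^ s := e1
      _ ≤ (128 * Real.sqrt s / ε) ^ s * (1/δ) := by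
          apply mul_le_mul_of_nonneg_right t3 (by positivity)
  have step3 : (2:ℝ) * ((128 * Real.sqrt s / ε) ^ s * (1 / δ))
      ≤ (1000 * Real.sqrt s / ε) ^ s * (1 / δ) := by
    have h2s : (2:ℝ) ≤ 2 ^ s := le_self_pow₀ (by norm_num) hs0
    have hA : (0:ℝ) ≤ (128 * Real.sqrt s / ε) ^ s := by positivity
    have e1 : (2:ℝ) ^ s * (128 * Real.sqrt s / ε) ^ s = (256 * Real.sqrt s / ε) ^ s := by
      rw [← mul_pow]
      congr 1
      field_simp
      ring
    have t4 : (256 * Real.sqrt s / ε) ^ s ≤ (1000 * Real.sqrt s / ε) ^ s := by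
      apply pow_le_pow_left₀ (by positivity)
      rw [div_le_div_iff₀ hε0 hε0]
      have hm := mul_le_mul_of_nonneg_right hsqpos.le hε0.le
      nlinarith [hm]
    have : (2:ℝ) * (128 * Real.sqrt s / ε) ^ s ≤ (1000 * Real.sqrt s / ε) ^ s := by
      calc (2:ℝ) * (128 * Real.sqrt s / ε) ^ s ≤ 2 ^ s * (128 * Real.sqrt s / ε) ^ s :=
            mul_le_mul_of_nonneg_right h2s hA
        _ = (256 * Real.sqrt s / ε) ^ s := e1
        _ ≤ (1000 * Real.sqrt s / ε) ^ s := t4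
    calc (2:ℝ) * ((128 * Real.sqrt s / ε) ^ s * (1 / δ))
        = (2 * (128 * Real.sqrt s / ε) ^ s) * (1 / δ) := by ring
      _ ≤ (1000 * Real.sqrt s / ε) ^ s * (1 / δ) := by
          apply mul_le_mul_of_nonneg_right this (by positivity)
  calc 2 * ((∑ k ∈ Finset.range (KK δ ε + 1), (2 * NN s δ ε k + 1) ^ s : ℕ) : ℝ)
      ≤ 2 * ((8 / η) ^ s * (4 / δ) + 6 ^ s * (6 / (ε * δ))) := by linarith
    _ = (8 / η) ^ s * (8 / δ) + 6 ^ s * (12 / (ε * δ)) := by ring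
    _ ≤ (128 * Real.sqrt s / ε) ^ s * (1 / δ) + (128 * Real.sqrt s / ε) ^ s * (1 / δ) := by
        linarith
    _ = 2 * ((128 * Real.sqrt s / ε) ^ s * (1 / δ)) := by ring
    _ ≤ (1000 * Real.sqrt s / ε) ^ s * (1 / δ) := step3

end Count


section Main
variable {s : ℕ} {δ ε : ℝ}

lemma wpos (hδ : 0 < δ) (x : E s) : (0:ℝ) < ‖x‖ ^ (1 + δ) + 1 := by
  have := Real.rpow_nonneg (norm_nonneg x) (1 + δ)
  linarith

lemma easy_case (hδ0 : 0 < δ) (hε0 : 0 < ε) (hcase : 1 ≤ ε ∨ s = 0) :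
    coverN (fun f g : T s => ⨆ x : E s, |f.1 x - g.1 x| / (‖x‖ ^ (1 + δ) + 1)) ε ≤ 1 := by
  have hcov : ∀ f : T s, (⨆ x : E s, |f.1 x - (t0 s).1 x| / (‖x‖ ^ (1 + δ) + 1)) ≤ ε := by
    intro f
    apply ciSup_le
    intro x
    rcases hcase with hε1 | hs0
    · have h1 : |f.1 x - 0| ≤ ‖x‖ := by
        have h := lip_bound f.2.1 x 0
        simpa [f.2.2] using h
      have h2 : ‖x‖ ≤ ‖x‖ ^ (1 + δ) + 1 := by
        rcases le_total ‖x‖ 1 with h3 | h3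
        · have := Real.rpow_nonneg (norm_nonneg x) (1 + δ)
          linarith
        · have h4 : ‖x‖ ^ (1:ℝ) ≤ ‖x‖ ^ (1 + δ) :=
            Real.rpow_le_rpow_of_exponent_le h3 (by linarith)
          rw [Real.rpow_one] at h4
          linarith
      rw [div_le_iff₀ (wpos hδ0 x)]
      have ht0 : (t0 s).1 x = 0 := rfl
      rw [ht0]
      calc |f.1 x - 0| ≤ ‖x‖ := h1
        _ ≤ ‖x‖ ^ (1 + δ) + 1 := h2
        _ ≤ ε * (‖x‖ ^ (1 + δ) + 1) := by nlinarith [wpos (s := s) hδ0 x]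
    · subst hs0
      have hx0 : x = 0 := by ext i; exact i.elim0
      have hzero : f.1 x - (t0 0).1 x = 0 := by
        rw [hx0, f.2.2]
        norm_num
        rfl
      rw [hzero, abs_zero, zero_div]
      exact hε0.le
  have hmem : ({t0 s} : Set (T s)) ∈ {S : Set (T s) | S.Finite ∧
      ∀ t : T s, ∃ s' ∈ S, (⨆ x : E s, |t.1 x - s'.1 x| / (‖x‖ ^ (1 + δ) + 1)) ≤ ε} :=
    ⟨Set.finite_singleton _, fun f => ⟨t0 s, Set.mem_singleton _, hcov f⟩⟩
  calc coverN (fun f g : T s => ⨆ x : E s, |f.1 x - g.1 x| / (‖x‖ ^ (1 + δ) + 1)) ε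
      ≤ ((({t0 s} : Set (T s)).ncard : ℕ) : ℝ≥0∞) := by
        apply iInf_le_of_le {t0 s}
        apply iInf_le_of_le hmem
        exact le_rfl
    _ = 1 := by rw [Set.ncard_singleton]; norm_num

set_option maxHeartbeats 1000000 in
lemma main_case (hs : 1 ≤ s) (hδ0 : 0 < δ) (hδ1 : δ ≤ 1) (hε0 : 0 < ε) (hε1 : ε ≤ 1) :
    coverN (fun f g : T s => ⨆ x : E s, |f.1 x - g.1 x| / (‖x‖ ^ (1 + δ) + 1)) ε
      ≤ ENNReal.ofReal (Real.exp ((1000 * Real.sqrt s / ε) ^ s * (1 / δ))) := by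
  classical
  set S : Set (T s) := Set.range (Phi s δ ε) with hS
  have hfin : S.Finite := by
    have h1 : S ⊆ Set.range (rep s δ ε) := by
      rw [hS]
      rintro _ ⟨f, rfl⟩
      exact ⟨Dm s δ ε f, rfl⟩
    exact (Set.finite_range _).subset h1
  have hcov : ∀ f : T s, ∃ g ∈ S, (⨆ x : E s, |f.1 x - g.1 x| / (‖x‖ ^ (1 + δ) + 1)) ≤ ε := by
    intro f
    refine ⟨Phi s δ ε f, ⟨f, rfl⟩, ?_⟩
    apply ciSup_le
    intro x
    rw [div_le_iff₀ (wpos hδ0 x)]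
    have hDm : Dm s δ ε f = Dm s δ ε (Phi s δ ε f) := (Dm_Phi s δ ε f).symm
    exact dist_bound hs hδ0 hε0 f (Phi s δ ε f) (Rd_eq hs hε0 f _ hDm) x
  have hcard : S.ncard ≤ 5 ^ (P0 s δ ε).card := by
    have h1 : S = rep s δ ε '' Set.range (Dm s δ ε) := by
      rw [hS, ← Set.range_comp]
      rfl
    rw [h1]
    calc (rep s δ ε '' Set.range (Dm s δ ε)).ncard ≤ (Set.range (Dm s δ ε)).ncard :=
          Set.ncard_image_le (Set.toFinite _)
      _ ≤ (Set.univ : Set ((↥(P0 s δ ε)) → ↥(Finset.Icc (-2:ℤ) 2))).ncard :=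
          Set.ncard_le_ncard (Set.subset_univ _) Set.finite_univ
      _ = Fintype.card ((↥(P0 s δ ε)) → ↥(Finset.Icc (-2:ℤ) 2)) := by
          rw [Set.ncard_univ, Nat.card_eq_fintype_card]
      _ = 5 ^ (P0 s δ ε).card := by
          rw [Fintype.card_fun, Fintype.card_coe, Fintype.card_coe]
          norm_num
          rfl
  have hexp : ((5:ℝ)) ^ (P0 s δ ε).card ≤ Real.exp ((1000 * Real.sqrt s / ε) ^ s * (1 / δ)) := by
    have h5 : (5:ℝ) ≤ Real.exp 2 := by
      have h := Real.exp_one_gt_d9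
      have e2 : Real.exp 2 = Real.exp 1 * Real.exp 1 := by
        rw [← Real.exp_add]; norm_num
      nlinarith
    calc (5:ℝ) ^ (P0 s δ ε).card ≤ (Real.exp 2) ^ (P0 s δ ε).card :=
          pow_le_pow_left₀ (by norm_num) h5 _
      _ = Real.exp (2 * (P0 s δ ε).card) := by
          rw [← Real.exp_nat_mul]
          congr 1
          ring
      _ ≤ Real.exp ((1000 * Real.sqrt s / ε) ^ s * (1 / δ)) := by
          rw [Real.exp_le_exp]
          have hc := card_P0_le (s := s) (δ := δ) (ε := ε)
          have hc2 : ((P0 s δ ε).card : ℝ)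
              ≤ ((∑ k ∈ Finset.range (KK δ ε + 1), (2 * NN s δ ε k + 1) ^ s : ℕ) : ℝ) := by
            exact_mod_cast hc
          have hcb := count_bound hs hδ0 hδ1 hε0 hε1
          linarith
  have hSn : (S.ncard : ℝ≥0∞) ≤ ENNReal.ofReal (Real.exp ((1000 * Real.sqrt s / ε) ^ s * (1 / δ))) := by
    rw [← ENNReal.ofReal_natCast]
    apply ENNReal.ofReal_le_ofReal
    calc ((S.ncard : ℕ) : ℝ) ≤ ((5 ^ (P0 s δ ε).card : ℕ) : ℝ) := by exact_mod_cast hcard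
      _ = (5:ℝ) ^ (P0 s δ ε).card := by push_cast; rfl
      _ ≤ Real.exp ((1000 * Real.sqrt s / ε) ^ s * (1 / δ)) := hexp
  refine le_trans ?_ hSn
  apply iInf_le_of_le S
  apply iInf_le_of_le ⟨hfin, hcov⟩
  exact le_rfl

end Main

end CoverAux

/-- Covering numbers of the set of 1-Lipschitz functions on `ℝ^s` vanishing at the origin,
with respect to the weighted supremum norm `‖f‖_(δ)` (Lemma 2.4 of the paper), stated in the
equivalent exponentiated form `N ≤ exp((C√s/ε)^s / δ)`. -/
theorem covering_lipschitz_weighted :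
    ∃ C : ℝ, 1 ≤ C ∧
      ∀ (s : ℕ) (δ : ℝ), 0 < δ → δ ≤ 1 → ∀ ε : ℝ, 0 < ε →
        coverN
          (fun f g : {f : EuclideanSpace ℝ (Fin s) → ℝ // LipschitzWith 1 f ∧ f 0 = 0} =>
            ⨆ x : EuclideanSpace ℝ (Fin s), |f.1 x - g.1 x| / (‖x‖ ^ (1 + δ) + 1)) ε
          ≤ ENNReal.ofReal (Real.exp ((C * Real.sqrt s / ε) ^ s * (1 / δ))) := by
  refine ⟨1000, by norm_num, ?_⟩
  intro s δ hδ0 hδ1 ε hε0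
  by_cases hcase : 1 ≤ ε ∨ s = 0
  · refine le_trans (CoverAux.easy_case hδ0 hε0 hcase) ?_
    rw [show (1:ℝ≥0∞) = ENNReal.ofReal (Real.exp 0) by simp]
    apply ENNReal.ofReal_le_ofReal
    apply Real.exp_le_exp.mpr
    apply mul_nonneg
    · apply pow_nonneg
      apply div_nonneg _ hε0.le
      exact mul_nonneg (by norm_num) (Real.sqrt_nonneg _)
    · exact one_div_nonneg.mpr hδ0.le
  · push_neg at hcase
    obtain ⟨hε1, hs0⟩ := hcase
    exact CoverAux.main_case (by omega) hδ0 hδ1 hε0 hε1.le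

end
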